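/- Let f(x) = ((e^x − K)⁺)² for K > 0 (power call payoff of order 2). For z ∈ ℂ with Im z ∈ (2, ∞), the Fourier transform ∫_ℝ e^{izx} f(x) dx exists and equals −2 K^{2+iz} / (iz(1+iz)(2+iz)). -/

import Mathlib

open MeasureTheory Complex Set Filter

lemma aux_int (w : ℂ) (hw : w.re < 0) (a : ℝ) :
    IntegrableOn (fun x : ℝ => Complex.exp (w * x)) (Set.Ioi a) := by
  apply Integrable.mono' ((exp_neg_integrableOn_Ioi a (b := -w.re) (by linarith)))
  · exact (Complex.continuous_exp.comp (continuous_const.mul Complex.continuous_ofReal)).aestronglyMeasurable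
  · filter_upwards with x
    rw [Complex.norm_exp]
    simp [Complex.mul_re, neg_mul]

lemma aux_val (w : ℂ) (hw : w.re < 0) (a : ℝ) :
    ∫ x in Set.Ioi a, Complex.exp (w * x) = -Complex.exp (w * a) / w := by
  have hw0 : w ≠ 0 := fun h => by simp [h] at hw
  have := integral_Ioi_of_hasDerivAt_of_tendsto (f := fun x : ℝ => Complex.exp (w * x) / w)
    (f' := fun x : ℝ => Complex.exp (w * x)) (a := a) (m := 0) ?_ ?_ (aux_int w hw a) ?_
  · rw [this]; ring
  · exact ((Complex.continuous_exp.comp (continuous_const.mul Complex.continuous_ofReal)).div_const w).continuousWithinAt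
  · intro x hx
    have : HasDerivAt (fun x : ℝ => Complex.exp (w * x)) (Complex.exp (w * x) * w) x := by
      have := (Complex.hasDerivAt_exp (w * x)).comp x ((hasDerivAt_id (x:ℂ)).const_mul w |>.comp_ofReal)
      simpa [Function.comp_def, mul_comm] using this
    simpa [mul_div_assoc, div_self hw0] using this.div_const w
  · have : Tendsto (fun x : ℝ => Complex.exp (w * x)) atTop (nhds 0) := by
      rw [tendsto_zero_iff_norm_tendsto_zero]
      have : Tendsto (fun x : ℝ => Real.exp (w.re * x)) atTop (nhds 0) :=
        Real.tendsto_exp_atBot.comp (tendsto_id.const_mul_atTop_of_neg hw)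
      refine this.congr fun x => ?_
      rw [Complex.norm_exp]; simp [Complex.mul_re]
    simpa using this.div_const w

theorem fourier_power_call (K : ℝ) (hK : 0 < K) (z : ℂ) (hz : 2 < z.im) :
    Integrable (fun x : ℝ =>
      Complex.exp (Complex.I * z * x) * (((max (Real.exp x - K) 0) ^ 2 : ℝ) : ℂ))
      (volume : Measure ℝ) ∧
    ∫ x : ℝ, Complex.exp (Complex.I * z * x) * (((max (Real.exp x - K) 0) ^ 2 : ℝ) : ℂ) =
      - 2 * Complex.exp ((2 + Complex.I * z) * Real.log K) /
        (Complex.I * z * (1 + Complex.I * z) * (2 + Complex.I * z)) := by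
  set w : ℂ := Complex.I * z with hwdef
  have hwre : w.re = -z.im := by simp [hwdef]
  set a : ℝ := Real.log K with hadef
  set g : ℝ → ℂ := fun x => Complex.exp ((w + 2) * x)
      - 2 * K * Complex.exp ((w + 1) * x) + K ^ 2 * Complex.exp (w * x) with hgdef
  have hre : ∀ c : ℝ, c ≤ 2 → (w + (c : ℂ)).re < 0 := by
    intro c hc; simp [hwre]; linarith
  have hre0 : w.re < 0 := by simpa using hre 0 (by norm_num)
  have hre1 : (w + 1).re < 0 := by simpa using hre 1 (by norm_num)
  have hre2 : (w + 2).re < 0 := by simpa using hre 2 (by norm_num)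
  have hne : ∀ u : ℂ, u.re < 0 → u ≠ 0 := fun u hu h => by simp [h] at hu
  -- pointwise identity
  have hptwise : ∀ x : ℝ,
      Complex.exp (Complex.I * z * x) * (((max (Real.exp x - K) 0) ^ 2 : ℝ) : ℂ)
        = Set.indicator (Set.Ioi a) g x := by
    intro x
    rcases le_or_gt x a with hx | hx
    · have hxle : Real.exp x ≤ K := by
        rw [hadef] at hx; calc Real.exp x ≤ Real.exp (Real.log K) := Real.exp_le_exp.2 hx
          _ = K := Real.exp_log hK
      rcases eq_or_lt_of_le hxle with heq | hlt
      · rw [Set.indicator_of_notMem (by simp; exact hx)]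
        simp [heq, hgdef]
      · rw [Set.indicator_of_notMem (by simp; exact hx)]
        rw [max_eq_right (by linarith)]; simp
    · rw [Set.indicator_of_mem (Set.mem_Ioi.2 hx)]
      have hxgt : K < Real.exp x := by
        rw [hadef] at hx
        calc K = Real.exp (Real.log K) := (Real.exp_log hK).symm
          _ < Real.exp x := Real.exp_lt_exp.2 hx
      rw [max_eq_left (by linarith)]
      have e1 : Complex.exp ((w + 1) * x) = Complex.exp (w * x) * Complex.exp (x : ℂ) := by
        rw [← Complex.exp_add]; ring_nf
      have e2 : Complex.exp ((w + 2) * x)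
          = Complex.exp (w * x) * (Complex.exp (x : ℂ) * Complex.exp (x : ℂ)) := by
        rw [← Complex.exp_add, ← Complex.exp_add]; ring_nf
      have hcexp : ((Real.exp x : ℝ) : ℂ) = Complex.exp (x : ℂ) := Complex.ofReal_exp x
      simp only [hgdef, e1, e2]
      push_cast
      rw [hwdef]
      ring
  have hfun : (fun x : ℝ =>
      Complex.exp (Complex.I * z * x) * (((max (Real.exp x - K) 0) ^ 2 : ℝ) : ℂ))
      = Set.indicator (Set.Ioi a) g := funext hptwise
  have hg_int : IntegrableOn g (Set.Ioi a) := by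
    exact (((aux_int _ hre2 a).sub (((aux_int _ hre1 a).const_mul (2 * K)))).add
      ((aux_int _ hre0 a).const_mul (K ^ 2)))
  have hint : Integrable (fun x : ℝ =>
      Complex.exp (Complex.I * z * x) * (((max (Real.exp x - K) 0) ^ 2 : ℝ) : ℂ)) volume := by
    rw [hfun]
    exact (integrable_indicator_iff measurableSet_Ioi).2 hg_int
  refine ⟨hint, ?_⟩
  rw [hfun, MeasureTheory.integral_indicator measurableSet_Ioi]
  have hsplit : ∫ x in Set.Ioi a, g x
      = (∫ x in Set.Ioi a, Complex.exp ((w + 2) * x))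
        - 2 * K * (∫ x in Set.Ioi a, Complex.exp ((w + 1) * x))
        + K ^ 2 * (∫ x in Set.Ioi a, Complex.exp (w * x)) := by
    have I1 : IntegrableOn (fun x : ℝ => Complex.exp ((w + 2) * x)) (Set.Ioi a) :=
      aux_int _ hre2 a
    have I2 : IntegrableOn (fun x : ℝ => 2 * (K : ℂ) * Complex.exp ((w + 1) * x)) (Set.Ioi a) :=
      (aux_int _ hre1 a).const_mul (2 * K)
    have I12 : IntegrableOn (fun x : ℝ => Complex.exp ((w + 2) * x)
        - 2 * (K : ℂ) * Complex.exp ((w + 1) * x)) (Set.Ioi a) := I1.sub I2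
    have I3 : IntegrableOn (fun x : ℝ => (K : ℂ) ^ 2 * Complex.exp (w * x)) (Set.Ioi a) :=
      (aux_int _ hre0 a).const_mul (K ^ 2)
    simp only [hgdef]
    rw [MeasureTheory.integral_add I12 I3, MeasureTheory.integral_sub I1 I2,
      MeasureTheory.integral_const_mul, MeasureTheory.integral_const_mul]
  rw [hsplit, aux_val _ hre2 a, aux_val _ hre1 a, aux_val _ hre0 a]
  have hKa : Complex.exp (a : ℂ) = (K : ℂ) := by
    rw [← Complex.ofReal_exp, hadef, Real.exp_log hK]
  have ea1 : Complex.exp ((w + 1) * a) = Complex.exp (w * a) * K := by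
    rw [show ((w + 1) * a : ℂ) = w * a + a by ring, Complex.exp_add, hKa]
  have ea2 : Complex.exp ((w + 2) * a) = Complex.exp (w * a) * K ^ 2 := by
    rw [show ((w + 2) * a : ℂ) = w * a + (a + a) by ring, Complex.exp_add, Complex.exp_add,
      hKa]; ring
  have eRHS : Complex.exp ((2 + Complex.I * z) * (Real.log K : ℂ))
      = Complex.exp (w * a) * K ^ 2 := by
    rw [show ((2 + Complex.I * z) * (Real.log K : ℂ)) = (w + 2) * (a : ℂ) by
      rw [hwdef, hadef]; ring]
    exact ea2
  rw [ea1, ea2, eRHS]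
  have h0 := hne _ hre0
  have h1 := hne _ hre1
  have h2 := hne _ hre2
  have h1' : 1 + w ≠ 0 := by rwa [add_comm] at h1
  have h2' : 2 + w ≠ 0 := by rwa [add_comm] at h2
  field_simp
  ring
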